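/- Let A be an event and let N_B, R_B, N_T, R_T be random variables with values in the natural numbers such that almost surely 1 ≤ N_T ≤ N_B ≤ m, R_B ≤ N_B, and R_T ≤ N_T, where m ≥ 1 is a fixed integer. Assume: (i) for all natural numbers n_b, r_b, n_t, r_t, P(A ∩ {N_B = n_b, R_B = r_b, N_T = n_t, R_T = r_t}) = P(A | N_B = n_b, R_B = r_b) · P(N_B = n_b, R_B = r_b, N_T = n_t, R_T = r_t) (A is conditionally independent of (N_T, R_T) given (N_B, R_B)); (ii) for all natural numbers n_b, n_t, r_t with P(N_T = n_t, R_T = r_t) > 0, P(N_B = n_b | N_T = n_t, R_T = r_t) = P(N_B = n_b | N_T = n_t) (N_B is conditionally independent of R_T given N_T). Then for every integer n_t with 1 ≤ n_t ≤ m and every integer r_t with 0 ≤ r_t ≤ n_t: P(A | N_T = n_t, R_T = r_t) · P(N_T = n_t) = Σ_{n_b = n_t}^{m} Σ_{r_b = 0}^{n_b} P(A | N_B = n_b, R_B = r_b) · P(N_B = n_b) · P(R_B = r_b | N_B = n_b, N_T = n_t, R_T = r_t) · P(N_T = n_t | N_B = n_b). (This is the recursion expressing the partial likelihood at the top of a species-tree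 branch in terms of partial likelihoods at the bottom of the branch.) -/

import Mathlib

open MeasureTheory Finset

/-- Conditional probability `P(A | B) = P(A ∩ B) / P(B)`, with the convention
`P(A | B) = 0` when `P(B) = 0` (automatic in `ℝ≥0∞` since `P(A ∩ B) ≤ P(B)`). -/
noncomputable def cp {Ω : Type*} [MeasurableSpace Ω] (P : Measure Ω) (A B : Set Ω) : ENNReal :=
  P (A ∩ B) / P B

/-- The recursion expressing the partial likelihood at the top of a species-tree branch in
terms of the partial likelihoods at the bottom of the branch:
`P(A | N_T = n_t, R_T = r_t) ⬝ P(N_T = n_t)`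
`  = ∑_{n_b=n_t}^{m} ∑_{r_b=0}^{n_b} P(A | N_B = n_b, R_B = r_b) ⬝ P(N_B = n_b)`
`      ⬝ P(R_B = r_b | N_B = n_b, N_T = n_t, R_T = r_t) ⬝ P(N_T = n_t | N_B = n_b)`. -/
lemma enn_helper {x y z p s t : ENNReal} (hx : x ≠ ⊤) (hy0 : y ≠ 0) (hy : y ≠ ⊤)
    (hz : z ≠ ⊤) (hp0 : p ≠ 0) (hp : p ≠ ⊤) (hs0 : s ≠ 0) (hs : s ≠ ⊤)
    (ht0 : t ≠ 0) (ht : t ≠ ⊤) (h : y / t = z / s) :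
    p * (x / y) * (z / p) = x * (s / t) := by
  have hL : p * (x / y) * (z / p) ≠ ⊤ :=
    ENNReal.mul_ne_top (ENNReal.mul_ne_top hp (ENNReal.div_lt_top hx hy0).ne)
      (ENNReal.div_lt_top hz hp0).ne
  have hR : x * (s / t) ≠ ⊤ := ENNReal.mul_ne_top hx (ENNReal.div_lt_top hs ht0).ne
  apply (ENNReal.toReal_eq_toReal_iff' hL hR).mp
  have h' : y.toReal / t.toReal = z.toReal / s.toReal := by
    rw [← ENNReal.toReal_div, ← ENNReal.toReal_div, h]
  have hyR : y.toReal ≠ 0 := by simp [ENNReal.toReal_eq_zero_iff, hy0, hy]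
  have hpR : p.toReal ≠ 0 := by simp [ENNReal.toReal_eq_zero_iff, hp0, hp]
  have hsR : s.toReal ≠ 0 := by simp [ENNReal.toReal_eq_zero_iff, hs0, hs]
  have htR : t.toReal ≠ 0 := by simp [ENNReal.toReal_eq_zero_iff, ht0, ht]
  rw [ENNReal.toReal_mul, ENNReal.toReal_mul, ENNReal.toReal_mul,
    ENNReal.toReal_div, ENNReal.toReal_div, ENNReal.toReal_div]
  field_simp at h' ⊢
  linear_combination (-x.toReal) * h'

theorem stmt10 {Ω : Type*} [MeasurableSpace Ω] (P : Measure Ω) [IsProbabilityMeasure P]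
    (m : ℕ) (hm : 1 ≤ m)
    (A : Set Ω) (hA : MeasurableSet A)
    (NB RB NT RT : Ω → ℕ)
    (hNB : Measurable NB) (hRB : Measurable RB) (hNT : Measurable NT) (hRT : Measurable RT)
    -- almost surely `1 ≤ N_T ≤ N_B ≤ m`, `R_B ≤ N_B` and `R_T ≤ N_T`
    (hae : ∀ᵐ ω ∂P, 1 ≤ NT ω ∧ NT ω ≤ NB ω ∧ NB ω ≤ m ∧ RB ω ≤ NB ω ∧ RT ω ≤ NT ω)
    -- (i) `A` is conditionally independent of `(N_T, R_T)` given `(N_B, R_B)`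
    (hci : ∀ nb rb nt rt : ℕ,
      P (A ∩ {ω | NB ω = nb ∧ RB ω = rb ∧ NT ω = nt ∧ RT ω = rt}) =
        cp P A {ω | NB ω = nb ∧ RB ω = rb} *
          P {ω | NB ω = nb ∧ RB ω = rb ∧ NT ω = nt ∧ RT ω = rt})
    -- (ii) `N_B` is conditionally independent of `R_T` given `N_T`
    (hci2 : ∀ nb nt rt : ℕ, 0 < P {ω | NT ω = nt ∧ RT ω = rt} →
      cp P {ω | NB ω = nb} {ω | NT ω = nt ∧ RT ω = rt} =
        cp P {ω | NB ω = nb} {ω | NT ω = nt})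
    (nt : ℕ) (hnt : 1 ≤ nt) (hntm : nt ≤ m) (rt : ℕ) (hrt : rt ≤ nt) :
    cp P A {ω | NT ω = nt ∧ RT ω = rt} * P {ω | NT ω = nt} =
      ∑ nb ∈ Finset.Icc nt m, ∑ rb ∈ Finset.range (nb + 1),
        cp P A {ω | NB ω = nb ∧ RB ω = rb} * P {ω | NB ω = nb} *
          cp P {ω | RB ω = rb} {ω | NB ω = nb ∧ NT ω = nt ∧ RT ω = rt} *
          cp P {ω | NT ω = nt} {ω | NB ω = nb} := by
  classical
  by_cases h0 : P {ω | NT ω = nt ∧ RT ω = rt} = 0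
  · -- degenerate case
    have hc0 : cp P A {ω | NT ω = nt ∧ RT ω = rt} = 0 := by
      rw [cp, measure_mono_null Set.inter_subset_right h0, ENNReal.zero_div]
    rw [hc0, zero_mul]
    symm
    refine Finset.sum_eq_zero fun nb _ => Finset.sum_eq_zero fun rb _ => ?_
    have hc1 : cp P {ω | RB ω = rb} {ω | NB ω = nb ∧ NT ω = nt ∧ RT ω = rt} = 0 := by
      rw [cp, measure_mono_null (by intro ω hω; exact ⟨hω.2.2.1, hω.2.2.2⟩) h0, ENNReal.zero_div]
    rw [hc1, mul_zero, zero_mul]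
  · -- main case
    have hbad : P {ω | ¬(1 ≤ NT ω ∧ NT ω ≤ NB ω ∧ NB ω ≤ m ∧ RB ω ≤ NB ω ∧ RT ω ≤ NT ω)} = 0 :=
      ae_iff.mp hae
    have m1 : ∀ n, MeasurableSet {ω | NB ω = n} := fun n => hNB (measurableSet_singleton n)
    have m2 : ∀ n, MeasurableSet {ω | RB ω = n} := fun n => hRB (measurableSet_singleton n)
    have m3 : ∀ n, MeasurableSet {ω | NT ω = n} := fun n => hNT (measurableSet_singleton n)
    have m4 : ∀ n, MeasurableSet {ω | RT ω = n} := fun n => hRT (measurableSet_singleton n)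
    have mE : ∀ nb rb : ℕ,
        MeasurableSet {ω | NB ω = nb ∧ RB ω = rb ∧ NT ω = nt ∧ RT ω = rt} := by
      intro nb rb
      have : {ω | NB ω = nb ∧ RB ω = rb ∧ NT ω = nt ∧ RT ω = rt} =
          {ω | NB ω = nb} ∩ ({ω | RB ω = rb} ∩ ({ω | NT ω = nt} ∩ {ω | RT ω = rt})) := by
        ext ω; simp only [Set.mem_inter_iff, Set.mem_setOf_eq]; try tauto
      rw [this]
      exact (m1 nb).inter ((m2 rb).inter ((m3 nt).inter (m4 rt)))
    have mF : ∀ nb : ℕ, MeasurableSet {ω | NB ω = nb ∧ NT ω = nt ∧ RT ω = rt} := by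
      intro nb
      have : {ω | NB ω = nb ∧ NT ω = nt ∧ RT ω = rt} =
          {ω | NB ω = nb} ∩ ({ω | NT ω = nt} ∩ {ω | RT ω = rt}) := by
        ext ω; simp only [Set.mem_inter_iff, Set.mem_setOf_eq]; try tauto
      rw [this]
      exact (m1 nb).inter ((m3 nt).inter (m4 rt))
    -- inner sum
    have hinner : ∀ nb : ℕ,
        ∑ rb ∈ Finset.range (nb + 1),
            P (A ∩ {ω | NB ω = nb ∧ RB ω = rb ∧ NT ω = nt ∧ RT ω = rt}) =
          P (A ∩ {ω | NB ω = nb ∧ NT ω = nt ∧ RT ω = rt}) := by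
      intro nb
      have hdisj : (↑(Finset.range (nb + 1)) : Set ℕ).PairwiseDisjoint
          (fun rb => A ∩ {ω | NB ω = nb ∧ RB ω = rb ∧ NT ω = nt ∧ RT ω = rt}) := by
        intro i _ j _ hij
        refine Set.disjoint_left.mpr fun ω h1 h2 => hij ?_
        exact h1.2.2.1.symm.trans h2.2.2.1
      rw [← measure_biUnion_finset hdisj fun rb _ => hA.inter (mE nb rb)]
      symm
      apply le_antisymm
      · calc P (A ∩ {ω | NB ω = nb ∧ NT ω = nt ∧ RT ω = rt})
            ≤ P ((⋃ rb ∈ Finset.range (nb + 1),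
                A ∩ {ω | NB ω = nb ∧ RB ω = rb ∧ NT ω = nt ∧ RT ω = rt}) ∪
                {ω | ¬(1 ≤ NT ω ∧ NT ω ≤ NB ω ∧ NB ω ≤ m ∧ RB ω ≤ NB ω ∧ RT ω ≤ NT ω)}) := by
              apply measure_mono
              intro ω hω
              by_cases hg : 1 ≤ NT ω ∧ NT ω ≤ NB ω ∧ NB ω ≤ m ∧ RB ω ≤ NB ω ∧ RT ω ≤ NT ω
              · left
                simp only [Set.mem_iUnion]
                refine ⟨RB ω, Finset.mem_range.mpr ?_, ⟨hω.1, hω.2.1, rfl, hω.2.2⟩⟩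
                have h1 := hg.2.2.2.1
                have h2 := hω.2.1
                omega
              · right; exact hg
          _ ≤ P (⋃ rb ∈ Finset.range (nb + 1),
                A ∩ {ω | NB ω = nb ∧ RB ω = rb ∧ NT ω = nt ∧ RT ω = rt}) +
              P {ω | ¬(1 ≤ NT ω ∧ NT ω ≤ NB ω ∧ NB ω ≤ m ∧ RB ω ≤ NB ω ∧ RT ω ≤ NT ω)} :=
            measure_union_le _ _
          _ = _ := by rw [hbad, add_zero]
      · apply measure_mono
        intro ω hω
        simp only [Set.mem_iUnion] at hω
        obtain ⟨rb, _, hωA, hb1, _, hb3, hb4⟩ := hω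
        exact ⟨hωA, hb1, hb3, hb4⟩
    -- outer sum
    have houter : ∑ nb ∈ Finset.Icc nt m,
          P (A ∩ {ω | NB ω = nb ∧ NT ω = nt ∧ RT ω = rt}) =
        P (A ∩ {ω | NT ω = nt ∧ RT ω = rt}) := by
      have hdisj : (↑(Finset.Icc nt m) : Set ℕ).PairwiseDisjoint
          (fun nb => A ∩ {ω | NB ω = nb ∧ NT ω = nt ∧ RT ω = rt}) := by
        intro i _ j _ hij
        refine Set.disjoint_left.mpr fun ω h1 h2 => hij ?_
        exact h1.2.1.symm.trans h2.2.1
      rw [← measure_biUnion_finset hdisj fun nb _ => hA.inter (mF nb)]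
      apply le_antisymm
      · apply measure_mono
        intro ω hω
        simp only [Set.mem_iUnion] at hω
        obtain ⟨nb, _, hωA, _, hb2, hb3⟩ := hω
        exact ⟨hωA, hb2, hb3⟩
      · calc P (A ∩ {ω | NT ω = nt ∧ RT ω = rt})
            ≤ P ((⋃ nb ∈ Finset.Icc nt m,
                A ∩ {ω | NB ω = nb ∧ NT ω = nt ∧ RT ω = rt}) ∪
                {ω | ¬(1 ≤ NT ω ∧ NT ω ≤ NB ω ∧ NB ω ≤ m ∧ RB ω ≤ NB ω ∧ RT ω ≤ NT ω)}) := by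
              apply measure_mono
              intro ω hω
              by_cases hg : 1 ≤ NT ω ∧ NT ω ≤ NB ω ∧ NB ω ≤ m ∧ RB ω ≤ NB ω ∧ RT ω ≤ NT ω
              · left
                simp only [Set.mem_iUnion]
                refine ⟨NB ω, Finset.mem_Icc.mpr ?_, ⟨hω.1, rfl, hω.2⟩⟩
                have h1 := hg.2.1
                have h2 := hg.2.2.1
                have h3 := hω.2.1
                omega
              · right; exact hg
          _ ≤ P (⋃ nb ∈ Finset.Icc nt m,
                A ∩ {ω | NB ω = nb ∧ NT ω = nt ∧ RT ω = rt}) +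
              P {ω | ¬(1 ≤ NT ω ∧ NT ω ≤ NB ω ∧ NB ω ≤ m ∧ RB ω ≤ NB ω ∧ RT ω ≤ NT ω)} :=
            measure_union_le _ _
          _ = _ := by rw [hbad, add_zero]
    have hsum : ∑ nb ∈ Finset.Icc nt m, ∑ rb ∈ Finset.range (nb + 1),
          P (A ∩ {ω | NB ω = nb ∧ RB ω = rb ∧ NT ω = nt ∧ RT ω = rt}) =
        P (A ∩ {ω | NT ω = nt ∧ RT ω = rt}) := by
      rw [Finset.sum_congr rfl fun nb _ => hinner nb]
      exact houter
    -- per-term identity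
    have hsnt : P {ω | NT ω = nt} ≠ 0 :=
      fun h => h0 (measure_mono_null (by intro ω hω; exact hω.1) h)
    have key : ∀ nb rb : ℕ,
        cp P A {ω | NB ω = nb ∧ RB ω = rb} * P {ω | NB ω = nb} *
            cp P {ω | RB ω = rb} {ω | NB ω = nb ∧ NT ω = nt ∧ RT ω = rt} *
            cp P {ω | NT ω = nt} {ω | NB ω = nb} =
          P (A ∩ {ω | NB ω = nb ∧ RB ω = rb ∧ NT ω = nt ∧ RT ω = rt}) *
            (P {ω | NT ω = nt} / P {ω | NT ω = nt ∧ RT ω = rt}) := by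
      intro nb rb
      have e1 : {ω | RB ω = rb} ∩ {ω | NB ω = nb ∧ NT ω = nt ∧ RT ω = rt} =
          {ω | NB ω = nb ∧ RB ω = rb ∧ NT ω = nt ∧ RT ω = rt} := by
        ext ω; simp only [Set.mem_inter_iff, Set.mem_setOf_eq]; try tauto
      have e2 : {ω | NB ω = nb} ∩ {ω | NT ω = nt ∧ RT ω = rt} =
          {ω | NB ω = nb ∧ NT ω = nt ∧ RT ω = rt} := by
        ext ω; simp only [Set.mem_inter_iff, Set.mem_setOf_eq]; try tauto
      have e3 : {ω | NT ω = nt} ∩ {ω | NB ω = nb} = {ω | NB ω = nb} ∩ {ω | NT ω = nt} :=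
        Set.inter_comm _ _
      by_cases hb : P {ω | NB ω = nb ∧ NT ω = nt ∧ RT ω = rt} = 0
      · have hz1 : P ({ω | RB ω = rb} ∩ {ω | NB ω = nb ∧ NT ω = nt ∧ RT ω = rt}) = 0 :=
          measure_mono_null Set.inter_subset_right hb
        have hz2 : P (A ∩ {ω | NB ω = nb ∧ RB ω = rb ∧ NT ω = nt ∧ RT ω = rt}) = 0 :=
          measure_mono_null (by intro ω hω; exact ⟨hω.2.1, hω.2.2.2.1, hω.2.2.2.2⟩) hb
        rw [show cp P {ω | RB ω = rb} {ω | NB ω = nb ∧ NT ω = nt ∧ RT ω = rt} = 0 by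
          rw [cp, hz1, ENNReal.zero_div], hz2, mul_zero, zero_mul, zero_mul]
      · by_cases hbr : P {ω | NB ω = nb ∧ RB ω = rb} = 0
        · have hz1 : P (A ∩ {ω | NB ω = nb ∧ RB ω = rb}) = 0 :=
            measure_mono_null Set.inter_subset_right hbr
          have hz2 : P (A ∩ {ω | NB ω = nb ∧ RB ω = rb ∧ NT ω = nt ∧ RT ω = rt}) = 0 :=
            measure_mono_null (by intro ω hω; exact ⟨hω.2.1, hω.2.2.1⟩) hbr
          rw [show cp P A {ω | NB ω = nb ∧ RB ω = rb} = 0 by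
            rw [cp, hz1, ENNReal.zero_div], hz2, zero_mul, zero_mul, zero_mul, zero_mul]
        · have hpb : P {ω | NB ω = nb} ≠ 0 :=
            fun h => hb (measure_mono_null (by intro ω hω; exact hω.1) h)
          have h2 := hci2 nb nt rt (pos_iff_ne_zero.mpr h0)
          simp only [cp] at h2
          rw [e2] at h2
          have hmain :
              P {ω | NB ω = nb} *
                  (P {ω | NB ω = nb ∧ RB ω = rb ∧ NT ω = nt ∧ RT ω = rt} /
                    P {ω | NB ω = nb ∧ NT ω = nt ∧ RT ω = rt}) *
                  (P ({ω | NB ω = nb} ∩ {ω | NT ω = nt}) / P {ω | NB ω = nb}) =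
                P {ω | NB ω = nb ∧ RB ω = rb ∧ NT ω = nt ∧ RT ω = rt} *
                  (P {ω | NT ω = nt} / P {ω | NT ω = nt ∧ RT ω = rt}) :=
            enn_helper (measure_ne_top P _) hb (measure_ne_top P _) (measure_ne_top P _)
              hpb (measure_ne_top P _) hsnt (measure_ne_top P _) h0 (measure_ne_top P _) h2
          rw [hci nb rb nt rt]
          simp only [cp]
          rw [e1, e3]
          calc P (A ∩ {ω | NB ω = nb ∧ RB ω = rb}) / P {ω | NB ω = nb ∧ RB ω = rb} *
                P {ω | NB ω = nb} *
                (P {ω | NB ω = nb ∧ RB ω = rb ∧ NT ω = nt ∧ RT ω = rt} /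
                  P {ω | NB ω = nb ∧ NT ω = nt ∧ RT ω = rt}) *
                (P ({ω | NB ω = nb} ∩ {ω | NT ω = nt}) / P {ω | NB ω = nb})
              = P (A ∩ {ω | NB ω = nb ∧ RB ω = rb}) / P {ω | NB ω = nb ∧ RB ω = rb} *
                (P {ω | NB ω = nb} *
                  (P {ω | NB ω = nb ∧ RB ω = rb ∧ NT ω = nt ∧ RT ω = rt} /
                    P {ω | NB ω = nb ∧ NT ω = nt ∧ RT ω = rt}) *
                  (P ({ω | NB ω = nb} ∩ {ω | NT ω = nt}) / P {ω | NB ω = nb})) := by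
                simp only [div_eq_mul_inv]; ring
            _ = P (A ∩ {ω | NB ω = nb ∧ RB ω = rb}) / P {ω | NB ω = nb ∧ RB ω = rb} *
                (P {ω | NB ω = nb ∧ RB ω = rb ∧ NT ω = nt ∧ RT ω = rt} *
                  (P {ω | NT ω = nt} / P {ω | NT ω = nt ∧ RT ω = rt})) := by rw [hmain]
            _ = _ := by simp only [div_eq_mul_inv]; ring
      -- end key
    calc cp P A {ω | NT ω = nt ∧ RT ω = rt} * P {ω | NT ω = nt}
        = P (A ∩ {ω | NT ω = nt ∧ RT ω = rt}) *
            (P {ω | NT ω = nt} / P {ω | NT ω = nt ∧ RT ω = rt}) := by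
          rw [cp]; simp only [div_eq_mul_inv]; ring
      _ = (∑ nb ∈ Finset.Icc nt m, ∑ rb ∈ Finset.range (nb + 1),
            P (A ∩ {ω | NB ω = nb ∧ RB ω = rb ∧ NT ω = nt ∧ RT ω = rt})) *
            (P {ω | NT ω = nt} / P {ω | NT ω = nt ∧ RT ω = rt}) := by rw [hsum]
      _ = ∑ nb ∈ Finset.Icc nt m, ∑ rb ∈ Finset.range (nb + 1),
            P (A ∩ {ω | NB ω = nb ∧ RB ω = rb ∧ NT ω = nt ∧ RT ω = rt}) *
            (P {ω | NT ω = nt} / P {ω | NT ω = nt ∧ RT ω = rt}) := by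
          rw [Finset.sum_mul]
          exact Finset.sum_congr rfl fun nb _ => Finset.sum_mul _ _ _
      _ = _ := Finset.sum_congr rfl fun nb _ =>
          Finset.sum_congr rfl fun rb _ => (key nb rb).symm
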